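/- Let $r,t\ge2$ and let $G$ be an $r$-graph on at least $t(r-1)+1$ vertices such that every pair of vertices is contained in some edge and $G$ contains no linear star $L^r_t$ (t edges sharing exactly one common vertex, pairwise disjoint otherwise). Then for every vertex $x$, the link $L(x)=\{e\setminus\{x\} : x\in e\in G\}$ contains no complete $(r-1)$-graph on $t(r-1)-1$ vertices. In particular, $G$ contains no complete $r$-graph on $t(r-1)$ vertices. -/
import Mathlib


open Finset

/-- Lagrangian polynomial: sum over edges of products of weights. -/
def lagPoly (G : Finset (Finset ℕ)) (x : ℕ → ℝ) : ℝ := ∑ e ∈ G, ∏ i ∈ e, x i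

/-- A feasible weight vector on `[n] = {1,…,n}`. -/
def IsFeasible (n : ℕ) (x : ℕ → ℝ) : Prop :=
  (∀ i, 0 ≤ x i) ∧ ∑ i ∈ Finset.Icc 1 n, x i = 1

/-- Lagrangian of a hypergraph on `[n]`. -/
noncomputable def lag (n : ℕ) (G : Finset (Finset ℕ)) : ℝ :=
  sSup {v : ℝ | ∃ x : ℕ → ℝ, IsFeasible n x ∧ lagPoly G x = v}

/-- `G` is an `r`-graph on the vertex set `{1,…,n}`. -/
def IsGraphOn (n r : ℕ) (G : Finset (Finset ℕ)) : Prop :=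
  ∀ e ∈ G, e ⊆ Finset.Icc 1 n ∧ e.card = r

/-- The compression `π_{ij}(G)`: each edge `f ∪ {j}` with `f` avoiding `i,j` and
`f ∪ {i} ∉ G` is replaced by `f ∪ {i}`. -/
def compress (G : Finset (Finset ℕ)) (i j : ℕ) : Finset (Finset ℕ) :=
  (G.filter fun e => ¬(j ∈ e ∧ i ∉ e ∧ insert i (e.erase j) ∉ G)) ∪
  ((G.filter fun e => j ∈ e ∧ i ∉ e ∧ insert i (e.erase j) ∉ G).image
    fun e => insert i (e.erase j))

/-- `G` contains `t` pairwise disjoint edges. -/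
def HasMatching (G : Finset (Finset ℕ)) (t : ℕ) : Prop :=
  ∃ M : Finset (Finset ℕ), M ⊆ G ∧ M.card = t ∧
    (M : Set (Finset ℕ)).Pairwise fun e f => Disjoint e f

/-- `G` contains a complete `r`-graph on `p` vertices. -/
def HasClique (G : Finset (Finset ℕ)) (p r : ℕ) : Prop :=
  ∃ S : Finset ℕ, S.card = p ∧ ∀ e ⊆ S, e.card = r → e ∈ G

/-- `G` contains no `r`-uniform linear star of size `t`: `t` edges through a common
vertex `x`, pairwise disjoint outside `x`. -/
def LinearStarFree (G : Finset (Finset ℕ)) (t : ℕ) : Prop :=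
  ¬∃ (x : ℕ) (M : Finset (Finset ℕ)), M ⊆ G ∧ M.card = t ∧ (∀ e ∈ M, x ∈ e) ∧
    (M : Set (Finset ℕ)).Pairwise fun e f => e ∩ f = {x}

lemma exists_disjoint_family (m : ℕ) (hm : 1 ≤ m) :
    ∀ (k : ℕ) (T : Finset ℕ), k * m ≤ T.card →
    ∃ M : Finset (Finset ℕ), M.card = k ∧ (∀ f ∈ M, f ⊆ T ∧ f.card = m) ∧
      (M : Set (Finset ℕ)).Pairwise Disjoint := by
  intro k
  induction k with
  | zero => intro T _; exact ⟨∅, by simp, by simp, by simp⟩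
  | succ k ih =>
    intro T hT
    have hmT : m ≤ T.card := le_trans (by nlinarith) hT
    obtain ⟨f, hfT, hfc⟩ := Finset.exists_subset_card_eq hmT
    have hstep : k * m ≤ (T \ f).card := by
      rw [Finset.card_sdiff_of_subset hfT, hfc]
      have : (k + 1) * m = k * m + m := by ring
      omega
    obtain ⟨M, hMc, hMf, hMd⟩ := ih (T \ f) hstep
    have hdisj : ∀ g ∈ M, Disjoint f g := by
      intro g hg
      rw [Finset.disjoint_left]
      intro a haf hag
      exact (Finset.mem_sdiff.mp ((hMf g hg).1 hag)).2 haf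
    have hfM : f ∉ M := by
      intro h
      have hfne : f.Nonempty := Finset.card_pos.mp (by omega)
      obtain ⟨a, ha⟩ := hfne
      exact Finset.disjoint_left.mp (hdisj f h) ha ha
    refine ⟨insert f M, ?_, ?_, ?_⟩
    · rw [Finset.card_insert_of_notMem hfM, hMc]
    · intro g hg
      rcases Finset.mem_insert.mp hg with h | h
      · exact h ▸ ⟨hfT, hfc⟩
      · exact ⟨(hMf g h).1.trans Finset.sdiff_subset, (hMf g h).2⟩
    · rw [Finset.coe_insert]
      exact hMd.insert (fun g hg _ => ⟨hdisj g hg, (hdisj g hg).symm⟩)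

theorem link_clique_free (n r t : ℕ) (hr : 2 ≤ r) (ht : 2 ≤ t)
    (hn : t*(r-1) + 1 ≤ n) (G : Finset (Finset ℕ)) (hG : IsGraphOn n r G)
    (hcov : ∀ u ∈ Finset.Icc 1 n, ∀ v ∈ Finset.Icc 1 n, u ≠ v →
      ∃ e ∈ G, u ∈ e ∧ v ∈ e)
    (hfree : LinearStarFree G t) :
    (∀ x ∈ Finset.Icc 1 n, ¬∃ S : Finset ℕ, x ∉ S ∧ S.card = t*(r-1) - 1 ∧
      ∀ f ⊆ S, f.card = r - 1 → insert x f ∈ G) ∧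
    ¬HasClique G (t*(r-1)) r := by
  -- abbreviations
  obtain ⟨t', rfl⟩ : ∃ t', t = t' + 2 := ⟨t - 2, by omega⟩
  obtain ⟨r', rfl⟩ : ∃ r', r = r' + 2 := ⟨r - 2, by omega⟩
  set t := t' + 2 with htdef
  set r := r' + 2 with hrdef
  have key : ∀ x ∈ Finset.Icc 1 n, ¬∃ S : Finset ℕ, x ∉ S ∧ S.card = t*(r-1) - 1 ∧
      ∀ f ⊆ S, f.card = r - 1 → insert x f ∈ G := by
    rintro x hx ⟨S, hxS, hSc, hSG⟩
    have hr1 : r - 1 = r' + 1 := by omega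
    have hScard : S.card = t * (r' + 1) - 1 := by rw [hSc, hr1]
    -- find y outside S ∪ {x}
    have hycard : 0 < ((Finset.Icc 1 n) \ insert x S).card := by
      have h1 : ((Finset.Icc 1 n) \ insert x S).card ≥
          (Finset.Icc 1 n).card - (insert x S).card := Finset.le_card_sdiff _ _
      have h2 : (insert x S).card ≤ S.card + 1 := Finset.card_insert_le _ _
      have h3 : (Finset.Icc 1 n).card = n := by rw [Nat.card_Icc]; omega
      have h4 : 1 ≤ t * (r' + 1) := Nat.mul_pos (by omega) (by omega)
      have h5 : t * (r - 1) = t * (r' + 1) := by rw [hr1]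
      omega
    obtain ⟨y, hy⟩ := Finset.card_pos.mp hycard
    rw [Finset.mem_sdiff, Finset.mem_insert] at hy
    obtain ⟨hyIcc, hyx⟩ := hy
    push_neg at hyx
    obtain ⟨hyx, hyS⟩ := hyx
    -- covering edge through x and y
    obtain ⟨e, heG, hxe, hye⟩ := hcov x hx y hyIcc (Ne.symm hyx)
    have hecard : e.card = r := (hG e heG).2
    -- S \ e is big
    have hSe : S ∩ e ⊆ (e.erase x).erase y := by
      intro a ha
      rw [Finset.mem_inter] at ha
      rw [Finset.mem_erase, Finset.mem_erase]
      exact ⟨fun h => hyS (h ▸ ha.1), fun h => hxS (h ▸ ha.1), ha.2⟩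
    have hSecard : (S ∩ e).card ≤ r' := by
      have := Finset.card_le_card hSe
      have h1 : ((e.erase x).erase y).card = r - 2 := by
        rw [Finset.card_erase_of_mem (Finset.mem_erase.mpr ⟨hyx, hye⟩),
          Finset.card_erase_of_mem hxe, hecard]
        omega
      omega
    have hT : (t' + 1) * (r' + 1) ≤ (S \ e).card := by
      have h1 := Finset.card_inter_add_card_sdiff S e
      have h2 : (t' + 1) * (r' + 1) + (r' + 1) = (t' + 2) * (r' + 1) := by ring
      have h3 : t * (r' + 1) = (t' + 2) * (r' + 1) := rfl
      omega
    obtain ⟨M, hMc, hMf, hMd⟩ := exists_disjoint_family (r' + 1) (by omega) (t' + 1) _ hT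
    -- elements of M give edges through x
    have hMG : ∀ f ∈ M, insert x f ∈ G := by
      intro f hf
      exact hSG f ((hMf f hf).1.trans Finset.sdiff_subset) (by rw [(hMf f hf).2]; omega)
    have hxf : ∀ f ∈ M, x ∉ f := fun f hf h =>
      hxS (Finset.sdiff_subset ((hMf f hf).1 h))
    have hyf : ∀ f ∈ M, y ∉ f := fun f hf h =>
      hyS (Finset.sdiff_subset ((hMf f hf).1 h))
    have hfe : ∀ f ∈ M, ∀ a ∈ f, a ∉ e := fun f hf a ha =>
      (Finset.mem_sdiff.mp ((hMf f hf).1 ha)).2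
    -- build the star
    set Star : Finset (Finset ℕ) := insert e (M.image fun f => insert x f) with hStar
    have hinj : Set.InjOn (fun f => insert x f) (M : Set (Finset ℕ)) := by
      intro f hf g hg h
      simp only [] at h
      rw [← Finset.erase_insert (hxf f (Finset.mem_coe.mp hf)),
        ← Finset.erase_insert (hxf g (Finset.mem_coe.mp hg)), h]
    have heIm : e ∉ M.image fun f => insert x f := by
      rw [Finset.mem_image]
      rintro ⟨f, hf, rfl⟩
      rcases Finset.mem_insert.mp hye with h | h
      · exact hyx h
      · exact hyf f hf h
    have hcross : ∀ f ∈ M, e ∩ insert x f = {x} := by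
      intro f hf
      ext a
      rw [Finset.mem_inter, Finset.mem_insert, Finset.mem_singleton]
      constructor
      · rintro ⟨hae, rfl | haf⟩
        · rfl
        · exact (hfe f hf a haf hae).elim
      · rintro rfl
        exact ⟨hxe, Or.inl rfl⟩
    refine hfree ⟨x, Star, ?_, ?_, ?_, ?_⟩
    · intro g hg
      rcases Finset.mem_insert.mp hg with h | h
      · exact h ▸ heG
      · obtain ⟨f, hf, rfl⟩ := Finset.mem_image.mp h
        exact hMG f hf
    · rw [hStar, Finset.card_insert_of_notMem heIm, Finset.card_image_of_injOn hinj, hMc]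
    · intro g hg
      rcases Finset.mem_insert.mp hg with h | h
      · exact h ▸ hxe
      · obtain ⟨f, _, rfl⟩ := Finset.mem_image.mp h
        exact Finset.mem_insert_self x f
    · intro g hg g' hg' hne
      simp only [hStar, Finset.coe_insert, Set.mem_insert_iff, Finset.mem_coe] at hg hg'
      rcases hg with rfl | hg <;> rcases hg' with rfl | hg'
      · exact (hne rfl).elim
      · obtain ⟨f, hf, rfl⟩ := Finset.mem_image.mp hg'
        exact hcross f hf
      · obtain ⟨f, hf, rfl⟩ := Finset.mem_image.mp hg
        rw [Finset.inter_comm]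
        exact hcross f hf
      · obtain ⟨f, hf, rfl⟩ := Finset.mem_image.mp hg
        obtain ⟨f', hf', rfl⟩ := Finset.mem_image.mp hg'
        have hff' : f ≠ f' := fun h => hne (by rw [h])
        have hd : Disjoint f f' := hMd (by exact_mod_cast hf) (by exact_mod_cast hf') hff'
        ext a
        rw [Finset.mem_inter, Finset.mem_singleton, Finset.mem_insert, Finset.mem_insert]
        constructor
        · rintro ⟨h1 | haf, h2 | haf'⟩
          · exact h1
          · exact h1
          · exact h2
          · exact (Finset.disjoint_left.mp hd haf haf').elim
        · rintro rfl
          exact ⟨Or.inl rfl, Or.inl rfl⟩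
  refine ⟨key, ?_⟩
  rintro ⟨S, hScard, hSall⟩
  have hr1 : r - 1 = r' + 1 := by omega
  have hSc : S.card = t * (r' + 1) := by rw [hScard, hr1]
  have hSne : S.Nonempty := Finset.card_pos.mp (by rw [hSc]; positivity)
  obtain ⟨x, hxS⟩ := hSne
  -- x is in [1,n] since it lies in some edge
  have herase : (S.erase x).card = t * (r' + 1) - 1 := by
    rw [Finset.card_erase_of_mem hxS, hSc]
  have hle : r' + 1 ≤ (S.erase x).card := by
    have hx2 : t * (r' + 1) = t' * (r' + 1) + 2 * r' + 2 := by
      show (t' + 2) * (r' + 1) = _; ring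
    omega
  obtain ⟨f0, hf0S, hf0c⟩ := Finset.exists_subset_card_eq hle
  have hxf0 : x ∉ f0 := fun h => (Finset.mem_erase.mp (hf0S h)).1 rfl
  have hedge : insert x f0 ∈ G := by
    apply hSall
    · intro a ha
      rcases Finset.mem_insert.mp ha with rfl | h
      · exact hxS
      · exact (Finset.erase_subset x S) (hf0S h)
    · rw [Finset.card_insert_of_notMem hxf0, hf0c]
  have hxIcc : x ∈ Finset.Icc 1 n := (hG _ hedge).1 (Finset.mem_insert_self x f0)
  refine key x hxIcc ⟨S.erase x, Finset.notMem_erase x S, ?_, ?_⟩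
  · rw [herase, hr1]
  · intro f hfS hfc
    apply hSall
    · intro a ha
      rcases Finset.mem_insert.mp ha with rfl | h
      · exact hxS
      · exact (Finset.erase_subset x S) (hfS h)
    · have hxf : x ∉ f := fun h => (Finset.mem_erase.mp (hfS h)).1 rfl
      rw [Finset.card_insert_of_notMem hxf, hfc]
      omega
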